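/- arXiv:2505.14800 — 3 statements merged into one kernel-verified Lean document; each statement's English description precedes it below -/
import Mathlib

section
/- If (E, 𝓛₁) and (E, 𝓛₂) are simple complexes of oriented matroids (COMs) on the same finite ground set E that have the same tope set (i.e., the covectors of 𝓛₁ with no zero entries are exactly the covectors of 𝓛₂ with no zero entries), then 𝓛₁ = 𝓛₂. In other words, a simple COM is uniquely determined by its set of topes. -/
open Finset

variable {E : Type*} [Fintype E] [DecidableEq E]

/-- The separator of two sign vectors: `S(X,Y) = {e : X_e = -Y_e ≠ 0}`. -/
def separator (X Y : E → SignType) : Finset E :=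
  Finset.univ.filter (fun e => X e = -Y e ∧ X e ≠ 0)

/-- The composition of two sign vectors: `(X∘Y)_e = X_e` if `X_e ≠ 0`, else `Y_e`. -/
def sComp (X Y : E → SignType) : E → SignType :=
  fun e => if X e ≠ 0 then X e else Y e

/-- A set of sign vectors is a COM if it satisfies face symmetry (FS) and
strong elimination (SE). -/
def IsCOM (L : Finset (E → SignType)) : Prop :=
  (∀ X ∈ L, ∀ Y ∈ L, sComp X (-Y) ∈ L) ∧
  (∀ X ∈ L, ∀ Y ∈ L, ∀ e ∈ separator X Y,
    ∃ Z ∈ L, Z e = 0 ∧ ∀ f ∉ separator X Y, Z f = sComp X Y f)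

/-- A COM is simple if every sign appears in every coordinate and every pair of
signs appears in every pair of distinct coordinates. -/
def IsSimpleCOM (L : Finset (E → SignType)) : Prop :=
  (∀ e : E, ∀ s : SignType, ∃ X ∈ L, X e = s) ∧
  (∀ e f : E, e ≠ f → ∀ s : SignType, ∃ X ∈ L, X e * X f = s)

/-- The topes of a COM: covectors with no zero entries. -/
def topes (L : Finset (E → SignType)) : Finset (E → SignType) :=
  L.filter (fun X => ∀ e, X e ≠ 0)

lemma separator_symm (X Y : E → SignType) : separator X Y = separator Y X := by
  ext e
  simp only [separator, mem_filter, mem_univ, true_and]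
  have : ∀ a b : SignType, (a = -b ∧ a ≠ 0) ↔ (b = -a ∧ b ≠ 0) := by decide
  exact this (X e) (Y e)

/-- The tope graph of a COM: vertices are topes, with an edge when the separator
has exactly one element. -/
def topeGraph (L : Finset (E → SignType)) :
    SimpleGraph {X // X ∈ topes L} where
  Adj P Q := (separator P.1 Q.1).card = 1
  symm := by constructor; intro P Q h; rwa [separator_symm]
  loopless := by
    constructor
    intro P h
    have : separator P.1 P.1 = ∅ := by
      ext e
      simp only [separator, mem_filter, mem_univ, true_and, Finset.notMem_empty,
        iff_false]
      have : ∀ a : SignType, ¬(a = -a ∧ a ≠ 0) := by decide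
      exact this (P.1 e)
    rw [this] at h
    simp at h

lemma sComp_mem {L : Finset (E → SignType)} (h : IsCOM L)
    {X Y : E → SignType} (hX : X ∈ L) (hY : Y ∈ L) : sComp X Y ∈ L := by
  have h1 := h.1 X hX Y hY
  have h2 := h.1 X hX _ h1
  have heq : sComp X (-(sComp X (-Y))) = sComp X Y := by
    funext e
    simp only [sComp, Pi.neg_apply]
    by_cases he : X e = 0
    · simp [he]
    · simp [he]
  rwa [heq] at h2

lemma exists_tope_ge {L : Finset (E → SignType)} (h : IsCOM L) (hs : IsSimpleCOM L) :
    ∀ n (X : E → SignType), X ∈ L → (univ.filter (fun e => X e = 0)).card = n →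
    ∃ T ∈ topes L, ∀ f, X f ≠ 0 → T f = X f := by
  intro n
  induction n using Nat.strong_induction_on with
  | _ n IH =>
    intro X hX hcard
    by_cases hz : ∀ e, X e ≠ 0
    · exact ⟨X, mem_filter.mpr ⟨hX, hz⟩, fun f _ => rfl⟩
    · push_neg at hz
      obtain ⟨e, he⟩ := hz
      obtain ⟨W, hW, hWe⟩ := hs.1 e 1
      have hX'mem : sComp X W ∈ L := sComp_mem h hX hW
      have hsub : (univ.filter (fun f => sComp X W f = 0)) ⊂
          (univ.filter (fun f => X f = 0)) := by
        constructor
        · intro f hf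
          simp only [mem_filter, mem_univ, true_and] at hf ⊢; simp only [sComp] at hf
          by_contra hXf
          rw [if_pos hXf] at hf
          exact hXf hf
        · intro hcon
          have he' : e ∈ (univ.filter (fun f => X f = 0)) := by
            simp [he]
          have := hcon he'
          simp only [mem_filter, mem_univ, true_and] at this
          simp only [sComp, he, hWe, ne_eq, not_true_eq_false, if_false] at this
          exact one_ne_zero this
      have hlt : (univ.filter (fun f => sComp X W f = 0)).card < n := by
        rw [← hcard]; exact card_lt_card hsub
      obtain ⟨T, hT, hTge⟩ := IH _ hlt (sComp X W) hX'mem rfl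
      refine ⟨T, hT, fun f hf => ?_⟩
      have h1 : sComp X W f = X f := by simp [sComp, hf]
      exact (hTge f (by rw [h1]; exact hf)).trans h1

lemma signtype_ne_neg (a : SignType) (ha : a ≠ 0) : a ≠ -a := by
  revert ha; revert a; decide

lemma com_step {L L' : Finset (E → SignType)} (h : IsCOM L) (hs : IsSimpleCOM L)
    (h' : IsCOM L') (ht : topes L = topes L') (n : ℕ)
    (IH : ∀ m < n, ∀ Y : E → SignType, (univ.filter (fun e => Y e = 0)).card = m →
      (Y ∈ L ↔ Y ∈ L'))
    (X : E → SignType) (hcard : (univ.filter (fun e => X e = 0)).card = n)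
    (hX : X ∈ L) : X ∈ L' := by
  by_cases hz : ∀ e, X e ≠ 0
  · have : X ∈ topes L := mem_filter.mpr ⟨hX, hz⟩
    rw [ht] at this
    exact (mem_filter.mp this).1
  -- get a tope of L above X
  obtain ⟨T, hT, hTge⟩ := exists_tope_ge h hs _ X hX rfl
  -- the fiber of X in L'
  set R := L'.filter (fun Z => ∀ f, X f ≠ 0 → Z f = X f) with hR
  have hTL' : T ∈ L' := by
    rw [ht] at hT; exact (mem_filter.mp hT).1
  have hRne : R.Nonempty := ⟨T, mem_filter.mpr ⟨hTL', hTge⟩⟩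
  obtain ⟨Z, hZR, hZmin⟩ :=
    R.exists_min_image (fun Z => (univ.filter (fun f => Z f ≠ 0)).card) hRne
  have hZL' : Z ∈ L' := (mem_filter.mp hZR).1
  have hZag : ∀ f, X f ≠ 0 → Z f = X f := (mem_filter.mp hZR).2
  by_cases hZX : ∀ f, X f = 0 → Z f = 0
  · have : Z = X := by
      funext f
      by_cases hf : X f = 0
      · rw [hZX f hf, hf]
      · exact hZag f hf
    rwa [← this]
  push_neg at hZX
  obtain ⟨e, hXe, hZe⟩ := hZX
  -- Z has strictly fewer zeros than X
  have hsub : (univ.filter (fun f => Z f = 0)) ⊂ (univ.filter (fun f => X f = 0)) := by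
    constructor
    · intro f hf
      simp only [mem_filter, mem_univ, true_and] at hf ⊢
      by_contra hXf
      exact absurd (hf ▸ hZag f hXf) (Ne.symm hXf)
    · intro hcon
      have : e ∈ (univ.filter (fun f => X f = 0)) := by simp [hXe]
      have := hcon this
      simp only [mem_filter, mem_univ, true_and] at this
      exact hZe this
  have hZlt : (univ.filter (fun f => Z f = 0)).card < n := by
    rw [← hcard]; exact card_lt_card hsub
  have hZL : Z ∈ L := (IH _ hZlt Z rfl).mpr hZL'
  -- reflect: W = X ∘ (-Z) ∈ L by face symmetry
  set W := sComp X (-Z) with hW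
  have hWL : W ∈ L := h.1 X hX Z hZL
  have hWzeros : (univ.filter (fun e => W e = 0)) = (univ.filter (fun e => Z e = 0)) := by
    ext f
    simp only [mem_filter, mem_univ, true_and]
    by_cases hXf : X f = 0
    · have hwf : W f = -Z f := by simp [hW, sComp, hXf]
      rw [hwf]
      exact (by decide : ∀ a : SignType, -a = 0 ↔ a = 0) _
    · have hw1 : W f = X f := by simp [hW, sComp, hXf]
      have hw2 : Z f = X f := hZag f hXf
      rw [hw1, hw2]
  have hWcard : (univ.filter (fun e => W e = 0)).card
      = (univ.filter (fun f => Z f = 0)).card := by rw [hWzeros]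
  have hWL' : W ∈ L' := (IH _ hZlt W hWcard).mp hWL
  -- strong elimination in L' between Z and W at e
  have hWe : W e = -Z e := by simp [hW, sComp, hXe]
  have hesep : e ∈ separator Z W := by
    simp only [separator, mem_filter, mem_univ, true_and]
    exact ⟨by rw [hWe, neg_neg], hZe⟩
  obtain ⟨Z', hZ'L', hZ'e, hZ'f⟩ := h'.2 Z hZL' W hWL' e hesep
  have hnotsep : ∀ f, X f ≠ 0 → f ∉ separator Z W := by
    intro f hf hmem
    simp only [separator, mem_filter, mem_univ, true_and] at hmem
    have h1 : W f = X f := by simp [hW, sComp, hf]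
    have h2 : Z f = X f := hZag f hf
    rw [h1, h2] at hmem
    exact signtype_ne_neg (X f) hf hmem.1
  have hZ'R : Z' ∈ R := by
    refine mem_filter.mpr ⟨hZ'L', fun f hf => ?_⟩
    rw [hZ'f f (hnotsep f hf), sComp]
    have h2 : Z f = X f := hZag f hf
    simp [h2, hf]
  have hZ'supp : (univ.filter (fun f => Z' f ≠ 0)) ⊂ (univ.filter (fun f => Z f ≠ 0)) := by
    constructor
    · intro f hf
      simp only [mem_filter, mem_univ, true_and] at hf ⊢
      intro hZf
      have hfnot : f ∉ separator Z W := by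
        simp only [separator, mem_filter, mem_univ, true_and]
        rintro ⟨-, hne⟩; exact hne hZf
      have hXf : X f = 0 := by
        by_contra hXf
        exact absurd (hZag f hXf ▸ hZf) hXf
      have : Z' f = W f := by
        rw [hZ'f f hfnot, sComp]; simp [hZf]
      rw [this] at hf
      apply hf
      simp [hW, sComp, hXf, hZf]
    · intro hcon
      have : e ∈ (univ.filter (fun f => Z f ≠ 0)) := by simp [hZe]
      have := hcon this
      simp only [mem_filter, mem_univ, true_and] at this
      exact this hZ'e
  exact absurd (hZmin Z' hZ'R) (not_le.mpr (card_lt_card hZ'supp))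

/-- a simple COM is uniquely determined by its set of topes: two simple
COMs on the same ground set with the same topes have the same covector sets. -/
theorem simple_COM_determined_by_topes (L₁ L₂ : Finset (E → SignType))
    (h₁ : IsCOM L₁) (h₁s : IsSimpleCOM L₁)
    (h₂ : IsCOM L₂) (h₂s : IsSimpleCOM L₂)
    (htopes : topes L₁ = topes L₂) : L₁ = L₂ := by
  have key : ∀ n (X : E → SignType), (univ.filter (fun e => X e = 0)).card = n →
      (X ∈ L₁ ↔ X ∈ L₂) := by
    intro n
    induction n using Nat.strong_induction_on with
    | _ n IH =>
      intro X hcard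
      constructor
      · exact com_step h₁ h₁s h₂ htopes n IH X hcard
      · exact com_step h₂ h₂s h₁ htopes.symm n
          (fun m hm Y hY => (IH m hm Y hY).symm) X hcard
  apply Finset.ext
  intro X
  exact key _ X rfl
end

section
/- Let V = (Fin 4 → Bool) \ {𝟙, 𝟘, e₁}, the vertex set of the forbidden pc-minor Q₄^{--}(1), and let M be the Varchenko matrix of V over ℤ[X₁, X₂, X₃, X₄]. Then det M = (1 − X₁²)⁶ (1 − X₂²)⁵ (1 − X₃²)⁵ (1 − X₄²)⁵ · (1 − X₂²X₃²X₄²). In particular, this non-COM partial cube has a Varchenko determinant in which every factor has the well-structured form 1 − (∏_{i ∈ I} X_i)². -/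
open Finset MvPolynomial

/-- The Varchenko matrix of a finite set of vertices of the hypercube `Fin n → Bool`:
the entry at `(u, v)` is the product of the variables `X i` over the coordinates `i`
in which `u` and `v` differ. -/
noncomputable def varchenkoMatrix {n : ℕ} (V : Finset (Fin n → Bool)) :
    Matrix {x // x ∈ V} {x // x ∈ V} (MvPolynomial (Fin n) ℤ) :=
  fun u v => ∏ i ∈ Finset.univ.filter (fun i => u.1 i ≠ v.1 i), MvPolynomial.X i

/-- The all-true vector (the antipode of the all-false vector). -/
def onesVec (n : ℕ) : Fin n → Bool := fun _ => true

/-- The all-false vector. -/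
def zerosVec (n : ℕ) : Fin n → Bool := fun _ => false

/-- The vector that is true exactly in coordinate `i`. -/
def unitVec {n : ℕ} (i : Fin n) : Fin n → Bool := fun j => j == i

namespace Q4Aux

open Matrix Kronecker

noncomputable abbrev RR := MvPolynomial (Fin 4) ℤ
noncomputable abbrev KK := FractionRing RR
noncomputable abbrev φ : RR →+* KK := algebraMap RR KK

/-- Varchenko matrix of the full 4-cube. -/
noncomputable def Mf : Matrix (Fin 4 → Bool) (Fin 4 → Bool) RR :=
  fun u v => ∏ i ∈ Finset.univ.filter (fun i => u i ≠ v i), X i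

/-- The sign-flipped Varchenko matrix (numerator of the inverse). -/
noncomputable def Np : Matrix (Fin 4 → Bool) (Fin 4 → Bool) RR :=
  fun u v => ∏ i ∈ Finset.univ.filter (fun i => u i ≠ v i), (-X i)

noncomputable def Δ : RR := ∏ i : Fin 4, (1 - X i ^ 2)

lemma coord_sum (u v : Fin 4 → Bool) (i : Fin 4) :
    (∑ b : Bool, (if u i ≠ b then (X i : RR) else 1) * (if b ≠ v i then -X i else 1))
      = if u i = v i then 1 - X i ^ 2 else 0 := by
  cases hu : u i <;> cases hv : v i <;> simp [Fintype.sum_bool] <;> ring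

lemma MN : Mf * Np = Δ • (1 : Matrix (Fin 4 → Bool) (Fin 4 → Bool) RR) := by
  ext u v
  rw [Matrix.mul_apply]
  have hterm : ∀ w : Fin 4 → Bool, Mf u w * Np w v
      = ∏ i : Fin 4, ((if u i ≠ w i then (X i : RR) else 1) * (if w i ≠ v i then -X i else 1)) := by
    intro w
    rw [Mf, Np, Finset.prod_filter, Finset.prod_filter, ← Finset.prod_mul_distrib]
  simp only [hterm]
  have hswap : (∑ w : Fin 4 → Bool,
      ∏ i : Fin 4, ((if u i ≠ w i then (X i : RR) else 1) * (if w i ≠ v i then -X i else 1)))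
      = ∏ i : Fin 4, ∑ b : Bool, ((if u i ≠ b then (X i : RR) else 1) * (if b ≠ v i then -X i else 1)) := by
    rw [Finset.prod_univ_sum]
    rw [Fintype.piFinset_univ]
  rw [hswap]
  simp only [coord_sum]
  by_cases h : u = v
  · subst h
    simp [Δ, Matrix.smul_apply, Matrix.one_apply]
  · have : ∃ i, u i ≠ v i := by
      by_contra hc
      push_neg at hc
      exact h (funext hc)
    obtain ⟨i, hi⟩ := this
    rw [Finset.prod_eq_zero (Finset.mem_univ i) (by simp [hi])]
    simp [Matrix.smul_apply, Matrix.one_apply, h]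

lemma Δ_ne_zero : Δ ≠ 0 := by
  intro h
  have h1 : constantCoeff Δ = 1 := by
    simp [Δ, map_prod]
  rw [h] at h1
  simp at h1

lemma φΔ_ne_zero : φ Δ ≠ 0 := by
  simpa using (map_ne_zero_iff φ (IsFractionRing.injective RR KK)).mpr Δ_ne_zero

/-- 2x2 building block. -/
noncomputable def a2 (i : Fin 4) : Matrix Bool Bool RR :=
  fun b c => if b = c then 1 else X i

def e2 : Fin 2 ≃ Bool where
  toFun := ![false, true]
  invFun := fun b => cond b 1 0
  left_inv := by decide
  right_inv := by decide

lemma det_a2 (i : Fin 4) : (a2 i).det = 1 - X i ^ 2 := by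
  rw [← Matrix.det_submatrix_equiv_self e2, Matrix.det_fin_two]
  simp [a2, e2, Matrix.submatrix_apply]
  ring

def qe : (Fin 4 → Bool) ≃ Bool × (Bool × (Bool × Bool)) where
  toFun := fun u => (u 0, (u 1, (u 2, u 3)))
  invFun := fun p => ![p.1, p.2.1, p.2.2.1, p.2.2.2]
  left_inv := by decide
  right_inv := by decide

lemma Mf_kron : Mf = (a2 0 ⊗ₖ (a2 1 ⊗ₖ (a2 2 ⊗ₖ a2 3))).submatrix qe qe := by
  ext u v
  rw [Mf, Finset.prod_filter, Fin.prod_univ_four]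
  simp [Matrix.submatrix_apply, Matrix.kroneckerMap_apply, a2, qe, ite_not, mul_assoc]

lemma det_Mf : Mf.det = (1 - X 0 ^ 2) ^ 8 * (1 - X 1 ^ 2) ^ 8 * (1 - X 2 ^ 2) ^ 8 * (1 - X 3 ^ 2) ^ 8 := by
  rw [Mf_kron, Matrix.det_submatrix_equiv_self, Matrix.det_kronecker, Matrix.det_kronecker,
    Matrix.det_kronecker, det_a2, det_a2, det_a2, det_a2]
  simp only [Fintype.card_prod, Fintype.card_bool]
  generalize (1 - X 0 ^ 2 : RR) = a
  generalize (1 - X 1 ^ 2 : RR) = b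
  generalize (1 - X 2 ^ 2 : RR) = c
  generalize (1 - X 3 ^ 2 : RR) = d
  ring

/-- the 3x3 matrix of the removed vertices. -/
noncomputable def Sm : Matrix (Fin 3) (Fin 3) RR :=
  !![1, -X 0, X 0 * X 1 * X 2 * X 3;
     -X 0, 1, -(X 1 * X 2 * X 3);
     X 0 * X 1 * X 2 * X 3, -(X 1 * X 2 * X 3), 1]

/-- the 13 remaining vertices -/
def gv : Fin 3 ⊕ Fin 13 → (Fin 4 → Bool) :=
  Sum.elim
    ![![false,false,false,false], ![true,false,false,false], ![true,true,true,true]]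
    ![![false,true,false,false], ![false,false,true,false], ![false,false,false,true],
      ![true,true,false,false], ![true,false,true,false], ![true,false,false,true],
      ![false,true,true,false], ![false,true,false,true], ![false,false,true,true],
      ![true,true,true,false], ![true,true,false,true], ![true,false,true,true],
      ![false,true,true,true]]

noncomputable def fe : (Fin 3 ⊕ Fin 13) ≃ (Fin 4 → Bool) := Equiv.ofBijective gv (by decide)

def Vset : Finset (Fin 4 → Bool) :=
  (Finset.univ : Finset (Fin 4 → Bool)) \ {onesVec 4, zerosVec 4, unitVec (0 : Fin 4)}

lemma mem_Vset : ∀ k : Fin 13, gv (Sum.inr k) ∈ Vset := by decide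

noncomputable def e13 : Fin 13 ≃ {x // x ∈ Vset} :=
  Equiv.ofBijective (fun k => ⟨gv (Sum.inr k), mem_Vset k⟩) (by decide)



lemma Sm_det : Sm.det = (1 - X 0 ^ 2) * (1 - X 1 ^ 2 * X 2 ^ 2 * X 3 ^ 2) := by
  rw [Matrix.det_fin_three]
  simp [Sm]
  ring

noncomputable def NK : Matrix (Fin 4 → Bool) (Fin 4 → Bool) KK := (φ Δ)⁻¹ • (Np.map φ)

lemma MNK : (Mf.map φ) * NK = 1 := by
  have hmap : (Δ • (1 : Matrix (Fin 4 → Bool) (Fin 4 → Bool) RR)).map φ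
      = (φ Δ) • (1 : Matrix (Fin 4 → Bool) (Fin 4 → Bool) KK) := by
    ext u v
    by_cases h : u = v <;> simp [h, Matrix.map_apply, Matrix.one_apply]
  have hms : Mf.map φ * ((φ Δ)⁻¹ • Np.map φ) = (φ Δ)⁻¹ • (Mf.map φ * Np.map φ) := by
    ext u v
    simp [Matrix.mul_apply, Matrix.smul_apply, Finset.mul_sum, mul_left_comm]
  rw [NK, hms, ← Matrix.map_mul, MN, hmap, smul_smul, inv_mul_cancel₀ φΔ_ne_zero, one_smul]

lemma Np_block : ∀ i j : Fin 3, Np (gv (Sum.inl i)) (gv (Sum.inl j)) = Sm i j := by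
  intro i j
  fin_cases i <;> fin_cases j <;>
    (rw [Np, Finset.prod_filter, Fin.prod_univ_four];
      simp [gv, Sm, Matrix.vecHead, Matrix.vecTail]) <;> ring

lemma E_eq : ((NK.submatrix fe fe).toBlocks₁₁ : Matrix (Fin 3) (Fin 3) KK)
    = (φ Δ)⁻¹ • (Sm.map φ) := by
  ext i j
  have : fe (Sum.inl i) = gv (Sum.inl i) := rfl
  simp [Matrix.toBlocks₁₁, NK, Matrix.submatrix_apply, Matrix.smul_apply, Matrix.map_apply,
    fe, Equiv.ofBijective, Np_block i j]


/-- Generic Jacobi-style block lemma: if `P * N = 1` then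
`P.det * det (N₁₁) = det (P₂₂)`. -/
lemma jacobi_block {α : Type*} [CommRing α] {m n : Type*} [Fintype m] [Fintype n]
    [DecidableEq m] [DecidableEq n] (P N : Matrix (m ⊕ n) (m ⊕ n) α) (h : P * N = 1) :
    P.det * (N.toBlocks₁₁).det = (P.toBlocks₂₂).det := by
  set A := P.toBlocks₁₁ with hA
  set B := P.toBlocks₁₂ with hB
  set C := P.toBlocks₂₁ with hC
  set D := P.toBlocks₂₂ with hD
  set E := N.toBlocks₁₁ with hE
  set F := N.toBlocks₁₂ with hF
  set G := N.toBlocks₂₁ with hG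
  set H := N.toBlocks₂₂ with hH
  have hP : P = Matrix.fromBlocks A B C D := (Matrix.fromBlocks_toBlocks P).symm
  have hN : N = Matrix.fromBlocks E F G H := (Matrix.fromBlocks_toBlocks _).symm
  rw [hP, hN, Matrix.fromBlocks_multiply, ← Matrix.fromBlocks_one] at h
  have h11 : A * E + B * G = 1 := by
    have := congrArg Matrix.toBlocks₁₁ h
    rwa [Matrix.toBlocks_fromBlocks₁₁, Matrix.toBlocks_fromBlocks₁₁] at this
  have h21 : C * E + D * G = 0 := by
    have := congrArg Matrix.toBlocks₂₁ h
    rwa [Matrix.toBlocks_fromBlocks₂₁, Matrix.toBlocks_fromBlocks₂₁] at this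
  have hQ : Matrix.fromBlocks A B C D * Matrix.fromBlocks E 0 G 1
      = Matrix.fromBlocks 1 B 0 D := by
    rw [Matrix.fromBlocks_multiply, h11, h21, Matrix.mul_zero, Matrix.mul_zero,
      Matrix.mul_one, Matrix.mul_one, zero_add, zero_add]
  calc P.det * E.det
      = P.det * (Matrix.fromBlocks E (0 : Matrix m n α) G 1).det := by
        rw [Matrix.det_fromBlocks_zero₁₂, Matrix.det_one, mul_one]
    _ = (Matrix.fromBlocks 1 B 0 D).det := by rw [← Matrix.det_mul, hP, hQ]
    _ = D.det := by rw [Matrix.det_fromBlocks_zero₂₁, Matrix.det_one, one_mul]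

lemma E_det : (((NK.submatrix fe fe).toBlocks₁₁ : Matrix (Fin 3) (Fin 3) KK)).det
    = ((φ Δ)⁻¹) ^ 3 * φ Sm.det := by
  rw [E_eq, Matrix.det_smul, ← RingHom.mapMatrix_apply, ← RingHom.map_det]
  simp

lemma D_eq : (((Mf.map φ).submatrix fe fe).toBlocks₂₂ : Matrix (Fin 13) (Fin 13) KK)
    = ((varchenkoMatrix Vset).submatrix e13 e13).map φ := by
  ext i j
  simp only [Matrix.toBlocks₂₂, Matrix.of_apply, Matrix.submatrix_apply, Matrix.map_apply]
  rfl

lemma D_det : (((Mf.map φ).submatrix fe fe).toBlocks₂₂ : Matrix (Fin 13) (Fin 13) KK).det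
    = φ ((varchenkoMatrix Vset).det) := by
  rw [D_eq, ← RingHom.mapMatrix_apply, ← RingHom.map_det, Matrix.det_submatrix_equiv_self]

lemma P_det : (((Mf.map φ).submatrix fe fe) : Matrix (Fin 3 ⊕ Fin 13) (Fin 3 ⊕ Fin 13) KK).det
    = φ Mf.det := by
  rw [Matrix.det_submatrix_equiv_self, ← RingHom.mapMatrix_apply, ← RingHom.map_det]

lemma key : (varchenkoMatrix Vset).det * Δ ^ 3 = Mf.det * Sm.det := by
  have hPN : ((Mf.map φ).submatrix fe fe) * (NK.submatrix fe fe) = 1 := by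
    rw [Matrix.submatrix_mul_equiv, MNK, Matrix.submatrix_one_equiv]
  have hPE := jacobi_block _ _ hPN
  rw [E_det, D_det, P_det] at hPE
  apply IsFractionRing.injective RR KK
  rw [_root_.map_mul, _root_.map_mul, map_pow]
  rw [show (algebraMap RR KK) = (φ : RR →+* KK) from rfl]
  rw [← hPE]
  have hne : (φ Δ) ^ 3 ≠ 0 := pow_ne_zero 3 φΔ_ne_zero
  field_simp
  rw [mul_right_comm, mul_div_cancel_right₀ _ φΔ_ne_zero]

theorem main : (varchenkoMatrix Vset).det =
    (1 - X 0 ^ 2) ^ 6 * (1 - X 1 ^ 2) ^ 5 * (1 - X 2 ^ 2) ^ 5 * (1 - X 3 ^ 2) ^ 5 *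
      (1 - X 1 ^ 2 * X 2 ^ 2 * X 3 ^ 2) := by
  have hfin : (varchenkoMatrix Vset).det * Δ ^ 3 =
      ((1 - X 0 ^ 2) ^ 6 * (1 - X 1 ^ 2) ^ 5 * (1 - X 2 ^ 2) ^ 5 * (1 - X 3 ^ 2) ^ 5 *
        (1 - X 1 ^ 2 * X 2 ^ 2 * X 3 ^ 2)) * Δ ^ 3 := by
    rw [key, det_Mf, Sm_det]
    simp only [Δ, Fin.prod_univ_four]
    generalize (1 - X 0 ^ 2 : RR) = a
    generalize (1 - X 1 ^ 2 : RR) = b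
    generalize (1 - X 2 ^ 2 : RR) = c
    generalize (1 - X 3 ^ 2 : RR) = d
    generalize (1 - X 1 ^ 2 * X 2 ^ 2 * X 3 ^ 2 : RR) = e
    ring
  exact mul_right_cancel₀ (pow_ne_zero 3 Δ_ne_zero) hfin

end Q4Aux

/-- Varchenko determinant of the forbidden pc-minor Q₄^{--}(1); every factor has the well-structured form 1 − (∏_{i ∈ I} X_i)². -/
theorem varchenko_det_Q4_mm1 :
    (varchenkoMatrix
      ((Finset.univ : Finset (Fin 4 → Bool)) \ {onesVec 4, zerosVec 4, unitVec (0 : Fin 4)})).det =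
    (1 - X 0 ^ 2) ^ 6 * (1 - X 1 ^ 2) ^ 5 * (1 - X 2 ^ 2) ^ 5 * (1 - X 3 ^ 2) ^ 5 * (1 - X 1 ^ 2 * X 2 ^ 2 * X 3 ^ 2) := by
  have h : ((Finset.univ : Finset (Fin 4 → Bool)) \ {onesVec 4, zerosVec 4, unitVec (0 : Fin 4)})
      = Q4Aux.Vset := rfl
  rw [h]
  exact Q4Aux.main
end

section
/- Let V = (Fin 5 → Bool) \ {𝟙, e₁}, the vertex set of the forbidden pc-minor Q₅^{-*}, and let M be the Varchenko matrix of V over ℤ[X₁, …, X₅]. Then det M = (1 − X₁²)¹⁴ (1 − X₂²)¹⁴ (1 − X₃²)¹⁴ (1 − X₄²)¹⁴ (1 − X₅²)¹⁴ · (1 − X₂²X₃²X₄²X₅²). -/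
set_option maxRecDepth 2000
open Finset MvPolynomial

namespace Q5Aux

/-! ### Generic lemmas (arbitrary index types / rings) -/

lemma gen_det_sq {R ι : Type} [CommRing R] [IsDomain R] [Fintype ι] [DecidableEq ι]
    (A B D : Matrix ι ι R) (δ : R) (m : ℕ) (hcard : Fintype.card ι = 2 * m)
    (hAB : A * B = δ • 1) (hBD : B = D * A * D) (hD2 : D * D = 1)
    (f : R →+* ℤ) (hf1 : f.mapMatrix A = 1) (hfδ : f δ = 1) :
    A.det = δ ^ m := by
  have hD : D.det ^ 2 = 1 := by
    rw [sq, ← Matrix.det_mul, hD2, Matrix.det_one]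
  have hBdet : B.det = A.det := by
    rw [hBD, Matrix.det_mul, Matrix.det_mul]
    calc D.det * A.det * D.det = A.det * D.det ^ 2 := by ring
      _ = A.det := by rw [hD, mul_one]
  have h2 : A.det * A.det = δ ^ m * δ ^ m := by
    have h := Matrix.det_mul A B
    rw [hAB, Matrix.det_smul, Matrix.det_one, mul_one, hcard, hBdet] at h
    rw [← h, two_mul, pow_add]
  have hfA : f A.det = 1 := by rw [RingHom.map_det, hf1, Matrix.det_one]
  rcases mul_self_eq_mul_self_iff.mp h2 with h | h
  · exact h
  · exfalso
    have hc := congrArg f h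
    rw [map_neg, map_pow, hfδ, hfA, one_pow] at hc
    norm_num at hc

lemma gen_jacobi {K W S ι : Type} [CommRing K] [Fintype ι] [DecidableEq ι]
    [Fintype W] [DecidableEq W] [Fintype S] [DecidableEq S]
    (e : W ⊕ S ≃ ι) (A B : Matrix ι ι K) (δ : K)
    (hAB : A * B = δ • 1) :
    A.det * (B.submatrix (⇑e ∘ Sum.inr) (⇑e ∘ Sum.inr)).det
      = (A.submatrix (⇑e ∘ Sum.inl) (⇑e ∘ Sum.inl)).det * δ ^ Fintype.card S := by
  set C := A.submatrix ⇑e ⇑e with hC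
  set Ei := B.submatrix ⇑e ⇑e with hEi
  have hsub1 : ((δ • (1 : Matrix ι ι K)).submatrix ⇑e ⇑e)
      = δ • ((1 : Matrix ι ι K).submatrix ⇑e ⇑e) := rfl
  have hCE : C * Ei = δ • 1 := by
    rw [hC, hEi, Matrix.submatrix_mul_equiv, hAB, hsub1, Matrix.submatrix_one_equiv]
  have hsmulblocks : (δ • (1 : Matrix (W ⊕ S) (W ⊕ S) K))
      = Matrix.fromBlocks (δ • 1) 0 0 (δ • 1) := by
    rw [← Matrix.fromBlocks_one]
    refine Matrix.ext fun i j => ?_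
    cases i <;> cases j <;>
      simp [Matrix.fromBlocks, Matrix.smul_apply]
  have hCb := C.fromBlocks_toBlocks
  have hEb := Ei.fromBlocks_toBlocks
  set C11 := C.toBlocks₁₁ with hC11
  set C12 := C.toBlocks₁₂
  set C21 := C.toBlocks₂₁
  set C22 := C.toBlocks₂₂
  set E11 := Ei.toBlocks₁₁
  set E12 := Ei.toBlocks₁₂
  set E21 := Ei.toBlocks₂₁
  set E22 := Ei.toBlocks₂₂ with hE22
  have hCE' : Matrix.fromBlocks C11 C12 C21 C22 * Matrix.fromBlocks E11 E12 E21 E22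
      = Matrix.fromBlocks (δ • 1) 0 0 (δ • 1) := by
    rw [hCb, hEb, ← hsmulblocks]; exact hCE
  rw [Matrix.fromBlocks_multiply] at hCE'
  have h12 : C11 * E12 + C12 * E22 = 0 := by
    have h := congrArg Matrix.toBlocks₁₂ hCE'
    rw [Matrix.toBlocks_fromBlocks₁₂, Matrix.toBlocks_fromBlocks₁₂] at h
    exact h
  have h22 : C21 * E12 + C22 * E22 = δ • 1 := by
    have h := congrArg Matrix.toBlocks₂₂ hCE'
    rw [Matrix.toBlocks_fromBlocks₂₂, Matrix.toBlocks_fromBlocks₂₂] at h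
    exact h
  have key : Matrix.fromBlocks C11 C12 C21 C22 * Matrix.fromBlocks 1 E12 0 E22
      = Matrix.fromBlocks C11 0 C21 (δ • 1) := by
    rw [Matrix.fromBlocks_multiply, h12, h22, Matrix.mul_one, Matrix.mul_zero, add_zero,
      Matrix.mul_one, Matrix.mul_zero, add_zero]
  have hdet1 : C.det * E22.det = C11.det * (δ ^ Fintype.card S) := by
    have h := congrArg Matrix.det key
    rw [Matrix.det_mul, Matrix.det_fromBlocks_zero₂₁, Matrix.det_fromBlocks_zero₁₂,
      Matrix.det_one, one_mul, Matrix.det_smul, Matrix.det_one, mul_one, hCb] at h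
    exact h
  have hCdet : C.det = A.det := Matrix.det_submatrix_equiv_self e A
  have hE22' : E22 = B.submatrix (⇑e ∘ Sum.inr) (⇑e ∘ Sum.inr) := rfl
  have hC11' : C11 = A.submatrix (⇑e ∘ Sum.inl) (⇑e ∘ Sum.inl) := rfl
  rw [← hC11', ← hE22', ← hCdet, hdet1]

lemma gen_det_two {R S : Type} [CommRing R] [Fintype S] [DecidableEq S]
    (e2 : Fin 2 ≃ S) (N : Matrix S S R) :
    N.det = N (e2 0) (e2 0) * N (e2 1) (e2 1) - N (e2 0) (e2 1) * N (e2 1) (e2 0) := by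
  rw [← Matrix.det_submatrix_equiv_self e2 N, Matrix.det_fin_two]
  rfl

/-! ### The concrete matrices -/

abbrev Rr : Type := MvPolynomial (Fin 5) ℤ
abbrev T : Type := Fin 5 → Bool

noncomputable def Am : Matrix T T Rr :=
  fun u v => ∏ i, if u i ≠ v i then X i else 1

noncomputable def Bm : Matrix T T Rr :=
  fun u v => ∏ i, if u i ≠ v i then -X i else 1

noncomputable def dP : Rr := ∏ i : Fin 5, (1 - X i ^ 2)

noncomputable def Dm : Matrix T T Rr :=
  Matrix.diagonal (fun u : T => ∏ i, if u i then (-1 : Rr) else 1)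

lemma Dm_eq : Dm = Matrix.diagonal (fun u : T => ∏ i, if u i then (-1 : Rr) else 1) := rfl

lemma mul_apply_factor (a b : Fin 5 → Bool → Bool → Rr)
    (M N : Matrix T T Rr)
    (hM : ∀ u v, M u v = ∏ i, a i (u i) (v i))
    (hN : ∀ u v, N u v = ∏ i, b i (u i) (v i)) (u w : T) :
    (M * N) u w = ∏ i, ∑ s : Bool, a i (u i) s * b i s (w i) := by
  rw [Matrix.mul_apply]
  rw [Finset.prod_univ_sum (fun _ => (univ : Finset Bool))
    (fun i s => a i (u i) s * b i s (w i)), Fintype.piFinset_univ]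
  refine Finset.sum_congr rfl fun v _ => ?_
  rw [hM, hN, ← Finset.prod_mul_distrib]

lemma key_sum (x : Rr) (a c : Bool) :
    ∑ s : Bool, (if a ≠ s then x else 1) * (if s ≠ c then -x else 1)
      = if a ≠ c then 0 else 1 - x ^ 2 := by
  cases a <;> cases c <;> simp <;> ring

lemma prod_ite_eq (u w : T) :
    (∏ i, if u i ≠ w i then (0 : Rr) else 1 - X i ^ 2) = if u = w then dP else 0 := by
  by_cases h : u = w
  · subst h; simp [dP]
  · obtain ⟨i, hi⟩ := Function.ne_iff.mp h
    rw [if_neg h]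
    exact Finset.prod_eq_zero (mem_univ i) (if_pos hi)

lemma AB : Am * Bm = dP • 1 := by
  refine Matrix.ext fun u w => ?_
  rw [mul_apply_factor (fun i a c => if a ≠ c then X i else 1)
      (fun i a c => if a ≠ c then -X i else 1) Am Bm (fun _ _ => rfl) (fun _ _ => rfl)]
  simp only [key_sum]
  rw [prod_ite_eq]
  simp [Matrix.smul_apply, Matrix.one_apply]

lemma B_eq_DAD : Bm = Dm * Am * Dm := by
  refine Matrix.ext fun u v => ?_
  rw [Dm_eq, Matrix.mul_diagonal, Matrix.diagonal_mul]
  show (∏ i, if u i ≠ v i then (-X i : Rr) else 1)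
    = (∏ i, if u i then (-1:Rr) else 1) * (∏ i, if u i ≠ v i then X i else 1)
      * (∏ i, if v i then (-1:Rr) else 1)
  rw [← Finset.prod_mul_distrib, ← Finset.prod_mul_distrib]
  refine Finset.prod_congr rfl fun i _ => ?_
  cases hu : u i <;> cases hv : v i <;> simp <;> ring

lemma DD : Dm * Dm = 1 := by
  rw [Dm_eq, Matrix.diagonal_mul_diagonal]
  have h : (fun u : T => (∏ i, if u i then (-1 : Rr) else 1) *
      ∏ i, if u i then (-1 : Rr) else 1) = fun _ => (1 : Rr) := by
    funext u
    rw [← Finset.prod_mul_distrib]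
    refine Finset.prod_eq_one fun i _ => ?_
    cases u i <;> simp
  rw [h, Matrix.diagonal_one]

lemma constCoeff_A : (constantCoeff (σ := Fin 5) (R := ℤ)).mapMatrix Am = 1 := by
  refine Matrix.ext fun u v => ?_
  rw [RingHom.mapMatrix_apply, Matrix.map_apply]
  show constantCoeff (∏ i, if u i ≠ v i then X i else 1) = (1 : Matrix T T ℤ) u v
  rw [map_prod, Matrix.one_apply]
  by_cases h : u = v
  · subst h; simp
  · obtain ⟨i, hi⟩ := Function.ne_iff.mp h
    rw [if_neg h]
    refine Finset.prod_eq_zero (mem_univ i) ?_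
    rw [if_pos hi, constantCoeff_X]

lemma constCoeff_d : constantCoeff dP = 1 := by simp [dP]

lemma card32 : Fintype.card T = 2 * 16 := by simp [Fintype.card_fun]

lemma detA : Am.det = dP ^ 16 :=
  gen_det_sq Am Bm Dm dP 16 card32 AB B_eq_DAD DD constantCoeff constCoeff_A constCoeff_d

lemma dP_ne : dP ≠ 0 := by
  intro h
  have := constCoeff_d
  rw [h, map_zero] at this
  exact one_ne_zero this.symm

/-! ### The vertex set and complement -/

local notation "Vs" => ((Finset.univ : Finset (Fin 5 → Bool)) \ {onesVec 5, unitVec (0 : Fin 5)})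

lemma not_mem_Vs (x : T) : ¬ x ∈ Vs ↔ x = onesVec 5 ∨ x = unitVec 0 := by
  simp only [Finset.mem_sdiff, Finset.mem_univ, true_and, not_not,
    Finset.mem_insert, Finset.mem_singleton]

def s0 : {x : T // ¬ x ∈ Vs} := ⟨onesVec 5, by simp⟩
def s1 : {x : T // ¬ x ∈ Vs} := ⟨unitVec 0, by simp⟩

lemma ones_ne_unit : onesVec 5 ≠ unitVec (0 : Fin 5) := by decide

def eS : Fin 2 ≃ {x : T // ¬ x ∈ Vs} where
  toFun := ![s0, s1]
  invFun x := if x.1 = onesVec 5 then 0 else 1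
  left_inv i := by
    fin_cases i
    · show (if s0.1 = onesVec 5 then (0 : Fin 2) else 1) = 0
      exact if_pos rfl
    · show (if s1.1 = onesVec 5 then (0 : Fin 2) else 1) = 1
      rw [if_neg (fun h => ones_ne_unit h.symm)]
  right_inv x := by
    rcases (not_mem_Vs x.1).mp x.2 with h | h
    · show (![s0, s1] (if x.1 = onesVec 5 then 0 else 1)) = x
      rw [if_pos h]
      exact Subtype.ext h.symm
    · show (![s0, s1] (if x.1 = onesVec 5 then 0 else 1)) = x
      rw [if_neg (fun hh => ones_ne_unit (h ▸ hh).symm)]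
      exact Subtype.ext h.symm

lemma cardS : Fintype.card {x : T // ¬ x ∈ Vs} = 2 := by
  rw [← Fintype.card_fin 2]
  exact (Fintype.card_congr eS).symm

/-! ### Entries of Bm at the removed vertices -/

lemma Bm_oo : Bm (onesVec 5) (onesVec 5) = 1 := by
  refine Finset.prod_eq_one fun i _ => ?_
  simp

lemma Bm_uu : Bm (unitVec 0) (unitVec 0) = 1 := by
  refine Finset.prod_eq_one fun i _ => ?_
  simp

lemma Bm_ou : Bm (onesVec 5) (unitVec 0) = X 1 * X 2 * X 3 * X 4 := by
  show (∏ i, if onesVec 5 i ≠ unitVec 0 i then (-X i : Rr) else 1) = _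
  rw [Fin.prod_univ_five]
  norm_num [onesVec, unitVec, show ((1:Fin 5) = 0) ↔ False from by decide,
    show ((2:Fin 5) = 0) ↔ False from by decide, show ((3:Fin 5) = 0) ↔ False from by decide,
    show ((4:Fin 5) = 0) ↔ False from by decide]

lemma Bm_uo : Bm (unitVec 0) (onesVec 5) = X 1 * X 2 * X 3 * X 4 := by
  show (∏ i, if unitVec 0 i ≠ onesVec 5 i then (-X i : Rr) else 1) = _
  rw [Fin.prod_univ_five]
  norm_num [onesVec, unitVec, show ((1:Fin 5) = 0) ↔ False from by decide,
    show ((2:Fin 5) = 0) ↔ False from by decide, show ((3:Fin 5) = 0) ↔ False from by decide,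
    show ((4:Fin 5) = 0) ↔ False from by decide]

/-! ### Assembly over the polynomial ring -/

def eV : {x : T // x ∈ Vs} ⊕ {x : T // ¬ x ∈ Vs} ≃ T := Equiv.sumCompl (fun x => x ∈ Vs)

lemma hMM : varchenkoMatrix Vs = Am.submatrix (⇑eV ∘ Sum.inl) (⇑eV ∘ Sum.inl) := by
  refine Matrix.ext fun u v => ?_
  show (∏ i ∈ Finset.univ.filter (fun i => u.1 i ≠ v.1 i), X i)
      = ∏ i, if u.1 i ≠ v.1 i then X i else 1
  rw [Finset.prod_filter]

noncomputable def BSS : Matrix {x : T // ¬ x ∈ Vs} {x : T // ¬ x ∈ Vs} Rr :=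
  Bm.submatrix (⇑eV ∘ Sum.inr) (⇑eV ∘ Sum.inr)

lemma BSS_det : BSS.det = 1 - (X 1 * X 2 * X 3 * X 4) ^ 2 := by
  rw [gen_det_two eS BSS]
  show Bm (onesVec 5) (onesVec 5) * Bm (unitVec 0) (unitVec 0)
      - Bm (onesVec 5) (unitVec 0) * Bm (unitVec 0) (onesVec 5) = _
  rw [Bm_oo, Bm_uu, Bm_ou, Bm_uo]
  ring

lemma main_det : (varchenkoMatrix Vs).det
    = dP ^ 14 * (1 - (X 1 * X 2 * X 3 * X 4) ^ 2) := by
  have hJ := gen_jacobi eV Am Bm dP AB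
  rw [cardS, detA, ← hMM,
    show Bm.submatrix (⇑eV ∘ Sum.inr) (⇑eV ∘ Sum.inr) = BSS from rfl, BSS_det] at hJ
  have h2 : (varchenkoMatrix Vs).det * dP ^ 2
      = (dP ^ 14 * (1 - (X 1 * X 2 * X 3 * X 4) ^ 2)) * dP ^ 2 := by
    rw [← hJ]; ring
  exact mul_right_cancel₀ (pow_ne_zero 2 dP_ne) h2

end Q5Aux

/-- Varchenko determinant of the forbidden pc-minor Q₅^{-*}. -/
theorem varchenko_det_Q5_minus_star :
    (varchenkoMatrix
      ((Finset.univ : Finset (Fin 5 → Bool)) \ {onesVec 5, unitVec (0 : Fin 5)})).det =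
    (1 - X 0 ^ 2) ^ 14 * (1 - X 1 ^ 2) ^ 14 * (1 - X 2 ^ 2) ^ 14 * (1 - X 3 ^ 2) ^ 14 * (1 - X 4 ^ 2) ^ 14 * (1 - X 1 ^ 2 * X 2 ^ 2 * X 3 ^ 2 * X 4 ^ 2) := by
  have hd : Q5Aux.dP = (1 - X 0 ^ 2) * (1 - X 1 ^ 2) * (1 - X 2 ^ 2) * (1 - X 3 ^ 2) * (1 - X 4 ^ 2) := by
    rw [show Q5Aux.dP = ∏ i : Fin 5, (1 - X i ^ 2) from rfl, Fin.prod_univ_five]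
  have e1 : ((1 - X 0 ^ 2) * (1 - X 1 ^ 2) * (1 - X 2 ^ 2) * (1 - X 3 ^ 2) * (1 - X 4 ^ 2) : Q5Aux.Rr) ^ 14
      = (1 - X 0 ^ 2) ^ 14 * (1 - X 1 ^ 2) ^ 14 * (1 - X 2 ^ 2) ^ 14 * (1 - X 3 ^ 2) ^ 14 * (1 - X 4 ^ 2) ^ 14 := by
    rw [mul_pow, mul_pow, mul_pow, mul_pow]
  have e2 : ((X 1 * X 2 * X 3 * X 4 : Q5Aux.Rr)) ^ 2 = X 1 ^ 2 * X 2 ^ 2 * X 3 ^ 2 * X 4 ^ 2 := by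
    rw [mul_pow, mul_pow, mul_pow]
  rw [Q5Aux.main_det, hd, e1, e2]
end
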